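/- Class prior recovery from the similar proportion (Eq. (16)): 2·π_S − 1 = (2·π₊ − 1)² ≥ 0; moreover, if π₊ ≥ 1/2 then π₊ = (1 + √(2·π_S − 1))/2, and if π₊ < 1/2 then π₊ = (1 − √(2·π_S − 1))/2. -/
import Mathlib


/-- Class prior recovery from the similar proportion (Eq. (16)). -/
theorem class_prior_recovery
    (πp πm : ℝ) (hπp : πp ∈ Set.Icc (0 : ℝ) 1) (hπm : πm = 1 - πp)
    (πS : ℝ) (hπS : πS = πp ^ 2 + πm ^ 2) :
    2 * πS - 1 = (2 * πp - 1) ^ 2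
      ∧ 0 ≤ 2 * πS - 1
      ∧ (1 / 2 ≤ πp → πp = (1 + Real.sqrt (2 * πS - 1)) / 2)
      ∧ (πp < 1 / 2 → πp = (1 - Real.sqrt (2 * πS - 1)) / 2) := by
  have heq : 2 * πS - 1 = (2 * πp - 1) ^ 2 := by subst hπm hπS; ring
  refine ⟨heq, heq ▸ sq_nonneg _, ?_, ?_⟩
  · intro h
    rw [heq, Real.sqrt_sq (by linarith)]
    ring
  · intro h
    rw [heq, show (2 * πp - 1) ^ 2 = (1 - 2 * πp) ^ 2 by ring,
      Real.sqrt_sq (by linarith)]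
    ring
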